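/- arXiv:1709.03899 — 2 statements merged into one kernel-verified Lean document; each statement's English description precedes it below -/
import Mathlib

section
/- For the GGS-group G with constant defining vector and p = 3, ψ(K'') contains G'' × G'' × G'', where K = ⟨ba⁻¹⟩^G. -/
/-- The vertex set of the rooted `d`-regular tree: finite words over `Fin d`. -/
abbrev Vert (d : ℕ) := List (Fin d)

/-- A permutation of the vertices sends children of `v` to children of the image
of `v`. -/
def MapsChildren {d : ℕ} (f : Equiv.Perm (Vert d)) : Prop :=
  ∀ (v : Vert d) (i : Fin d), ∃ j : Fin d, f (v ++ [i]) = f v ++ [j]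

/-- The automorphism group of the rooted `d`-regular tree, realised as the subgroup
of permutations of the vertex set which, together with their inverses, map children
to children (equivalently, preserve the root, the levels and the tree structure). -/
def AutT (d : ℕ) : Subgroup (Equiv.Perm (Vert d)) where
  carrier := {f | MapsChildren f ∧ MapsChildren f.symm}
  one_mem' := ⟨fun v i => ⟨i, rfl⟩, fun v i => ⟨i, rfl⟩⟩
  mul_mem' := by
    rintro f g ⟨hf, hf'⟩ ⟨hg, hg'⟩
    refine ⟨fun v i => ?_, fun v i => ?_⟩
    · obtain ⟨j, hj⟩ := hg v i
      obtain ⟨k, hk⟩ := hf (g v) j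
      exact ⟨k, by simp [Equiv.Perm.mul_apply, hj, hk]⟩
    · obtain ⟨j, hj⟩ := hf' v i
      obtain ⟨k, hk⟩ := hg' (f.symm v) j
      exact ⟨k, show g.symm (f.symm (v ++ [i])) = g.symm (f.symm v) ++ [k] by
        rw [hj, hk]⟩
  inv_mem' := by
    rintro f ⟨hf, hf'⟩
    exact ⟨hf', hf⟩

/-- The full pointwise stabilizer of level `n` in `Aut T`. -/
def lvlStab (d n : ℕ) : Subgroup (AutT d) where
  carrier := {f | ∀ v : Vert d, v.length = n → (f : Equiv.Perm (Vert d)) v = v}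
  one_mem' := fun v _ => rfl
  mul_mem' := by
    intro f g hf hg v hv
    simp [Equiv.Perm.mul_apply, hg v hv, hf v hv]
  inv_mem' := by
    intro f hf v hv
    have h := hf v hv
    have h2 : (f : Equiv.Perm (Vert d))⁻¹ v = v := by
      rw [Equiv.Perm.inv_eq_iff_eq]; exact h.symm
    simpa using h2

/-- The subgroup of automorphisms supported on the subtree rooted at the word `u`. -/
def rigid (d : ℕ) (u : Vert d) : Subgroup (AutT d) where
  carrier := {f | ∀ w : Vert d, ¬ u <+: w → (f : Equiv.Perm (Vert d)) w = w}
  one_mem' := fun w _ => rfl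
  mul_mem' := by
    intro f g hf hg w hw
    simp [Equiv.Perm.mul_apply, hg w hw, hf w hw]
  inv_mem' := by
    intro f hf w hw
    have h := hf w hw
    have h2 : (f : Equiv.Perm (Vert d))⁻¹ w = w := by
      rw [Equiv.Perm.inv_eq_iff_eq]; exact h.symm
    simpa using h2

/-- The rigid stabilizer in `G` of the vertex `u`. -/
def ristV {d : ℕ} (G : Subgroup (AutT d)) (u : Vert d) : Subgroup (AutT d) :=
  G ⊓ rigid d u

/-- The rigid stabilizer in `G` of level `n`: the subgroup generated by (equivalently,
the product of) the rigid vertex stabilizers at level `n`. -/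
def ristL {d : ℕ} (G : Subgroup (AutT d)) (n : ℕ) : Subgroup (AutT d) :=
  ⨆ u ∈ {u : Vert d | u.length = n}, ristV G u

/-- `G` acts transitively on every level of the tree. -/
def LevelTransitive {d : ℕ} (G : Subgroup (AutT d)) : Prop :=
  ∀ u v : Vert d, u.length = v.length → ∃ g ∈ G, (g : Equiv.Perm (Vert d)) u = v

section GGS

variable (p : ℕ) [NeZero p]

/-- The rooted automorphism `a` of the `p`-regular tree: it permutes the first-level
subtrees by the `p`-cycle `x ↦ x + 1`. -/
def gA : List (Fin p) → List (Fin p)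
  | [] => []
  | x :: w => (x + 1) :: w

/-- The inverse of `gA`. -/
def gAI : List (Fin p) → List (Fin p)
  | [] => []
  | x :: w => (x - 1) :: w

/-- The directed automorphism `b = (a, a, …, a, b)` of the GGS-group with constant
defining vector. -/
def gB : List (Fin p) → List (Fin p)
  | [] => []
  | x :: w => if (x : ℕ) = p - 1 then x :: gB w else x :: gA p w

/-- The inverse of `gB`. -/
def gBI : List (Fin p) → List (Fin p)
  | [] => []
  | x :: w => if (x : ℕ) = p - 1 then x :: gBI w else x :: gAI p w

theorem gAI_gA : ∀ l, gAI p (gA p l) = l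
  | [] => rfl
  | x :: w => by simp [gA, gAI]

theorem gA_gAI : ∀ l, gA p (gAI p l) = l
  | [] => rfl
  | x :: w => by simp [gA, gAI]

theorem gBI_gB : ∀ l, gBI p (gB p l) = l
  | [] => rfl
  | x :: w => by
    by_cases h : (x : ℕ) = p - 1
    · simp [gB, gBI, h, gBI_gB w]
    · simp [gB, gBI, h, gAI_gA]

theorem gB_gBI : ∀ l, gB p (gBI p l) = l
  | [] => rfl
  | x :: w => by
    by_cases h : (x : ℕ) = p - 1
    · simp [gB, gBI, h, gB_gBI w]
    · simp [gB, gBI, h, gA_gAI]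

/-- `a` as a permutation of the vertices. -/
def aPerm : Equiv.Perm (Vert p) :=
  ⟨gA p, gAI p, gAI_gA p, gA_gAI p⟩

/-- `b` as a permutation of the vertices. -/
def bPerm : Equiv.Perm (Vert p) :=
  ⟨gB p, gBI p, gBI_gB p, gB_gBI p⟩

theorem gA_append (v : Vert p) (i : Fin p) : ∃ j, gA p (v ++ [i]) = gA p v ++ [j] := by
  cases v with
  | nil => exact ⟨i + 1, rfl⟩
  | cons x w => exact ⟨i, rfl⟩

theorem gAI_append (v : Vert p) (i : Fin p) : ∃ j, gAI p (v ++ [i]) = gAI p v ++ [j] := by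
  cases v with
  | nil => exact ⟨i - 1, rfl⟩
  | cons x w => exact ⟨i, rfl⟩

theorem gB_append : ∀ (v : Vert p) (i : Fin p), ∃ j, gB p (v ++ [i]) = gB p v ++ [j]
  | [], i => by
    by_cases h : (i : ℕ) = p - 1 <;> exact ⟨i, by simp [gB, gA, h]⟩
  | x :: w, i => by
    by_cases h : (x : ℕ) = p - 1
    · obtain ⟨j, hj⟩ := gB_append w i
      exact ⟨j, by simp [gB, h, hj]⟩
    · obtain ⟨j, hj⟩ := gA_append p w i
      exact ⟨j, by simp [gB, h, hj]⟩

theorem gBI_append : ∀ (v : Vert p) (i : Fin p), ∃ j, gBI p (v ++ [i]) = gBI p v ++ [j]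
  | [], i => by
    by_cases h : (i : ℕ) = p - 1 <;> exact ⟨i, by simp [gBI, gAI, h]⟩
  | x :: w, i => by
    by_cases h : (x : ℕ) = p - 1
    · obtain ⟨j, hj⟩ := gBI_append w i
      exact ⟨j, by simp [gBI, h, hj]⟩
    · obtain ⟨j, hj⟩ := gAI_append p w i
      exact ⟨j, by simp [gBI, h, hj]⟩

/-- The generator `a` of the GGS-group, as a tree automorphism. -/
def aut_a : AutT p :=
  ⟨aPerm p, gA_append p, gAI_append p⟩

/-- The generator `b` of the GGS-group (constant defining vector), as a tree
automorphism. -/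
def aut_b : AutT p :=
  ⟨bPerm p, gB_append p, gBI_append p⟩

/-- The GGS-group with constant defining vector: `G = ⟨a, b⟩`. -/
def GGS : Subgroup (AutT p) :=
  Subgroup.closure {aut_a p, aut_b p}

/-- `K = ⟨b a⁻¹⟩^G`, the normal closure of `b a⁻¹` in `G`. -/
def GGSK : Subgroup (AutT p) :=
  Subgroup.closure {x | ∃ g ∈ GGS p, x = g * (aut_b p * (aut_a p)⁻¹) * g⁻¹}

end GGS

open scoped commutatorElement

namespace GGSP
open Subgroup

abbrev W3 := Vert 3

/-- `a` and `b` as short names. -/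
def aA : AutT 3 := aut_a 3
def bB : AutT 3 := aut_b 3

lemma mc (f : AutT 3) : MapsChildren (f : Equiv.Perm (Vert 3)) := f.2.1
lemma mc' (f : AutT 3) : MapsChildren ((f : Equiv.Perm (Vert 3)).symm) := f.2.2

lemma root_nil (f : AutT 3) : (f : Equiv.Perm (Vert 3)) [] = [] := by
  have hs : ((f : Equiv.Perm (Vert 3))).symm [] = [] := by
    rcases List.eq_nil_or_concat (((f : Equiv.Perm (Vert 3))).symm []) with h | ⟨v, i, h⟩
    · exact h
    · exfalso
      obtain ⟨j, hj⟩ := mc f v i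
      have h2 : ([] : W3) = (f : Equiv.Perm (Vert 3)) v ++ [j] := by
        calc ([] : W3) = (f : Equiv.Perm (Vert 3)) (((f : Equiv.Perm (Vert 3))).symm [])
              := (Equiv.apply_symm_apply _ _).symm
          _ = (f : Equiv.Perm (Vert 3)) (v ++ [i]) := by rw [h, List.concat_eq_append]
          _ = _ := hj
      simp at h2
  calc (f : Equiv.Perm (Vert 3)) [] 
      = (f : Equiv.Perm (Vert 3)) (((f : Equiv.Perm (Vert 3))).symm []) := by rw [hs]
    _ = [] := Equiv.apply_symm_apply _ _

lemma symm_nil (f : AutT 3) : ((f : Equiv.Perm (Vert 3))).symm [] = [] := by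
  have h := root_nil f⁻¹
  simpa [Equiv.Perm.inv_def] using h

/-- The permutation `(g₀, g₁, g₂)` acting on the subtrees with trivial root action. -/
def triP (g₀ g₁ g₂ : AutT 3) : Equiv.Perm (Vert 3) where
  toFun w := match w with
    | [] => []
    | x :: w => x :: (![g₀, g₁, g₂] x : AutT 3).val w
  invFun w := match w with
    | [] => []
    | x :: w => x :: ((![g₀, g₁, g₂] x : AutT 3).val.symm w)
  left_inv w := by cases w with
    | nil => rfl
    | cons x w => simp
  right_inv w := by cases w with
    | nil => rfl
    | cons x w => simp

lemma triP_mem (g₀ g₁ g₂ : AutT 3) : triP g₀ g₁ g₂ ∈ AutT 3 := by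
  constructor
  · intro v i
    cases v with
    | nil => exact ⟨i, by simp [triP, root_nil]⟩
    | cons x w =>
        obtain ⟨j, hj⟩ := mc (![g₀,g₁,g₂] x) w i
        exact ⟨j, by simp [triP, hj]⟩
  · intro v i
    cases v with
    | nil => exact ⟨i, by simp [triP, symm_nil]⟩
    | cons x w =>
        obtain ⟨j, hj⟩ := mc' (![g₀,g₁,g₂] x) w i
        exact ⟨j, by simp [triP, hj]⟩

/-- `tri g₀ g₁ g₂` as an element of `Aut T`. -/
def tri (g₀ g₁ g₂ : AutT 3) : AutT 3 := ⟨triP g₀ g₁ g₂, triP_mem _ _ _⟩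

lemma tri_nil (g₀ g₁ g₂ : AutT 3) : (tri g₀ g₁ g₂ : Equiv.Perm W3) [] = [] := rfl

lemma tri_cons (g₀ g₁ g₂ : AutT 3) (x : Fin 3) (w : W3) :
    (tri g₀ g₁ g₂ : Equiv.Perm W3) (x :: w) = x :: (![g₀,g₁,g₂] x : AutT 3).val w := rfl

lemma tri_mul (g₀ g₁ g₂ h₀ h₁ h₂ : AutT 3) :
    tri g₀ g₁ g₂ * tri h₀ h₁ h₂ = tri (g₀*h₀) (g₁*h₁) (g₂*h₂) := by
  apply Subtype.ext; apply Equiv.ext; intro w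
  cases w with
  | nil =>
      show (tri g₀ g₁ g₂ : Equiv.Perm W3) ((tri h₀ h₁ h₂ : Equiv.Perm W3) []) = _
      rw [tri_nil, tri_nil, tri_nil]
  | cons x w =>
      show (tri g₀ g₁ g₂ : Equiv.Perm W3) ((tri h₀ h₁ h₂ : Equiv.Perm W3) (x :: w)) = _
      rw [tri_cons, tri_cons, tri_cons]
      fin_cases x <;> simp

lemma tri_one : tri 1 1 1 = 1 := by
  apply Subtype.ext; apply Equiv.ext; intro w
  cases w with
  | nil => rfl
  | cons x w => fin_cases x <;> rfl

lemma tri_inv (g₀ g₁ g₂ : AutT 3) : (tri g₀ g₁ g₂)⁻¹ = tri g₀⁻¹ g₁⁻¹ g₂⁻¹ := by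
  rw [inv_eq_iff_mul_eq_one, tri_mul]
  simp [tri_one]

end GGSP
namespace GGSP
open Subgroup

lemma gA3 (l : W3) : gA 3 (gA 3 (gA 3 l)) = l := by
  cases l with
  | nil => rfl
  | cons x w =>
      have h : ∀ y : Fin 3, y + 1 + 1 + 1 = y := by decide
      simp [gA, h]

lemma gB3 (l : W3) : gB 3 (gB 3 (gB 3 l)) = l := by
  induction l with
  | nil => rfl
  | cons x w ih =>
      by_cases h : (x : ℕ) = 3 - 1
      · simp [gB, h, ih]
      · simp [gB, h, gA3]

lemma aP_apply (w : W3) : (aA : Equiv.Perm W3) w = gA 3 w := rfl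
lemma bP_apply (w : W3) : (bB : Equiv.Perm W3) w = gB 3 w := rfl

lemma a_cube : aA * (aA * aA) = 1 := by
  apply Subtype.ext; apply Equiv.ext; intro w
  show (aA : Equiv.Perm W3) ((aA : Equiv.Perm W3) ((aA : Equiv.Perm W3) w)) = w
  rw [aP_apply, aP_apply, aP_apply, gA3]

lemma b_cube : bB * (bB * bB) = 1 := by
  apply Subtype.ext; apply Equiv.ext; intro w
  show (bB : Equiv.Perm W3) ((bB : Equiv.Perm W3) ((bB : Equiv.Perm W3) w)) = w
  rw [bP_apply, bP_apply, bP_apply, gB3]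

lemma aa : aA * aA = aA⁻¹ := by
  have h : (aA * aA) * aA = 1 := by rw [mul_assoc]; exact a_cube
  exact eq_inv_of_mul_eq_one_left h

lemma bb : bB * bB = bB⁻¹ := by
  have h : (bB * bB) * bB = 1 := by rw [mul_assoc]; exact b_cube
  exact eq_inv_of_mul_eq_one_left h

lemma aia : aA⁻¹ * aA⁻¹ = aA := by
  have := congrArg (·⁻¹) aa; simp [mul_inv_rev] at this; exact this
lemma bib : bB⁻¹ * bB⁻¹ = bB := by
  have := congrArg (·⁻¹) bb; simp [mul_inv_rev] at this; exact this

lemma aa_assoc (x : AutT 3) : aA * (aA * x) = aA⁻¹ * x := by rw [← mul_assoc, aa]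
lemma bb_assoc (x : AutT 3) : bB * (bB * x) = bB⁻¹ * x := by rw [← mul_assoc, bb]
lemma aia_assoc (x : AutT 3) : aA⁻¹ * (aA⁻¹ * x) = aA * x := by rw [← mul_assoc, aia]
lemma bib_assoc (x : AutT 3) : bB⁻¹ * (bB⁻¹ * x) = bB * x := by rw [← mul_assoc, bib]

/-- `b = (a, a, b)`. -/
lemma b_tri : bB = tri aA aA bB := by
  apply Subtype.ext; apply Equiv.ext; intro w
  cases w with
  | nil => rfl
  | cons x w =>
      rw [tri_cons, bP_apply]
      fin_cases x
      · show gB 3 (0 :: w) = 0 :: gA 3 w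
        simp [gB]
      · show gB 3 (1 :: w) = 1 :: gA 3 w
        simp [gB]
      · show gB 3 (2 :: w) = 2 :: gB 3 w
        simp [gB]

/-- `a` commutes past `tri` with a cyclic shift. -/
lemma a_tri (g₀ g₁ g₂ : AutT 3) : aA * tri g₀ g₁ g₂ = tri g₂ g₀ g₁ * aA := by
  apply Subtype.ext; apply Equiv.ext; intro w
  show (aA : Equiv.Perm W3) ((tri g₀ g₁ g₂ : Equiv.Perm W3) w)
      = (tri g₂ g₀ g₁ : Equiv.Perm W3) ((aA : Equiv.Perm W3) w)
  cases w with
  | nil => rfl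
  | cons x w =>
      rw [tri_cons, aP_apply, aP_apply]
      show gA 3 (x :: _) = _
      fin_cases x <;> simp [gA, tri_cons] <;> rfl

lemma ai_tri (g₀ g₁ g₂ : AutT 3) : aA⁻¹ * tri g₀ g₁ g₂ = tri g₁ g₂ g₀ * aA⁻¹ := by
  have h := a_tri g₁ g₂ g₀
  calc aA⁻¹ * tri g₀ g₁ g₂ = aA⁻¹ * ((aA * tri g₁ g₂ g₀) * aA⁻¹) := by rw [h]; group
    _ = tri g₁ g₂ g₀ * aA⁻¹ := by group

lemma a_tri_assoc (g₀ g₁ g₂ x : AutT 3) :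
    aA * (tri g₀ g₁ g₂ * x) = tri g₂ g₀ g₁ * (aA * x) := by
  rw [← mul_assoc, a_tri, mul_assoc]
lemma ai_tri_assoc (g₀ g₁ g₂ x : AutT 3) :
    aA⁻¹ * (tri g₀ g₁ g₂ * x) = tri g₁ g₂ g₀ * (aA⁻¹ * x) := by
  rw [← mul_assoc, ai_tri, mul_assoc]
lemma tri_mul_assoc (g₀ g₁ g₂ h₀ h₁ h₂ x : AutT 3) :
    tri g₀ g₁ g₂ * (tri h₀ h₁ h₂ * x) = tri (g₀*h₀) (g₁*h₁) (g₂*h₂) * x := by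
  rw [← mul_assoc, tri_mul]

lemma conj_a_tri (g₀ g₁ g₂ : AutT 3) : aA * tri g₀ g₁ g₂ * aA⁻¹ = tri g₂ g₀ g₁ := by
  rw [a_tri]; group

lemma conj_ai_tri (g₀ g₁ g₂ : AutT 3) : aA⁻¹ * tri g₀ g₁ g₂ * aA = tri g₁ g₂ g₀ := by
  rw [ai_tri]; group

lemma bi_tri : bB⁻¹ = tri aA⁻¹ aA⁻¹ bB⁻¹ := by
  conv_lhs => rw [b_tri]
  rw [tri_inv]

lemma conj_b_tri (g₀ g₁ g₂ : AutT 3) :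
    bB * tri g₀ g₁ g₂ * bB⁻¹ = tri (aA*g₀*aA⁻¹) (aA*g₁*aA⁻¹) (bB*g₂*bB⁻¹) := by
  nth_rewrite 1 [b_tri]
  conv_lhs => rw [bi_tri]
  rw [tri_mul, tri_mul]

lemma conj_bi_tri (g₀ g₁ g₂ : AutT 3) :
    bB⁻¹ * tri g₀ g₁ g₂ * bB = tri (aA⁻¹*g₀*aA) (aA⁻¹*g₁*aA) (bB⁻¹*g₂*bB) := by
  have h := conj_b_tri (aA⁻¹*g₀*aA) (aA⁻¹*g₁*aA) (bB⁻¹*g₂*bB)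
  have h2 : bB * tri (aA⁻¹*g₀*aA) (aA⁻¹*g₁*aA) (bB⁻¹*g₂*bB) * bB⁻¹ = tri g₀ g₁ g₂ := by
    rw [h]; congr 1 <;> group
  rw [← h2]; group

end GGSP
namespace GGSP
open Subgroup

abbrev GG : Subgroup (AutT 3) := GGS 3
abbrev KK : Subgroup (AutT 3) := GGSK 3

/-- `c = b a⁻¹`. -/
def cc : AutT 3 := bB * aA⁻¹

lemma haG : aA ∈ GG := subset_closure (by left; rfl)
lemma hbG : bB ∈ GG := subset_closure (by right; rfl)
lemma hcG : cc ∈ GG := mul_mem hbG (inv_mem haG)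
lemma KK_eq : KK = Subgroup.closure {x | ∃ g ∈ GGS 3, x = g * (aut_b 3 * (aut_a 3)⁻¹) * g⁻¹} := rfl
lemma GG_eq : GG = Subgroup.closure {aut_a 3, aut_b 3} := rfl

lemma hcK : cc ∈ KK := subset_closure ⟨1, one_mem _, by simp only [one_mul, inv_one, mul_one]; rfl⟩

lemma K_le_G : KK ≤ GG := by
  rw [KK_eq, closure_le]
  rintro x ⟨g, hg, rfl⟩
  exact mul_mem (mul_mem hg (mul_mem hbG (inv_mem haG))) (inv_mem hg)

lemma mapK {g : AutT 3} (hg : g ∈ GG) :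
    Subgroup.map (MulAut.conj g).toMonoidHom KK ≤ KK := by
  rw [KK_eq, MonoidHom.map_closure, closure_le]
  rintro x ⟨y, ⟨h, hh, rfl⟩, rfl⟩
  refine subset_closure ⟨g * h, mul_mem hg hh, ?_⟩
  simp [MulAut.conj_apply, mul_assoc]

lemma mapKd {g : AutT 3} (hg : g ∈ GG) :
    Subgroup.map (MulAut.conj g).toMonoidHom ⁅KK, KK⁆ ≤ ⁅KK, KK⁆ := by
  rw [Subgroup.map_commutator]
  exact commutator_mono (mapK hg) (mapK hg)

lemma mapKdd {g : AutT 3} (hg : g ∈ GG) :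
    Subgroup.map (MulAut.conj g).toMonoidHom ⁅(⁅KK, KK⁆ : Subgroup (AutT 3)), ⁅KK, KK⁆⁆
      ≤ ⁅(⁅KK, KK⁆ : Subgroup (AutT 3)), ⁅KK, KK⁆⁆ := by
  rw [Subgroup.map_commutator]
  exact commutator_mono (mapKd hg) (mapKd hg)

lemma mapNN {g : AutT 3} (hg : g ∈ GG) :
    Subgroup.map (MulAut.conj g).toMonoidHom ⁅(⁅KK, KK⁆ : Subgroup (AutT 3)), KK⁆
      ≤ ⁅(⁅KK, KK⁆ : Subgroup (AutT 3)), KK⁆ := by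
  rw [Subgroup.map_commutator]
  exact commutator_mono (mapKd hg) (mapK hg)

lemma conj_mem_of_map {H : Subgroup (AutT 3)} {g k : AutT 3}
    (hmap : Subgroup.map (MulAut.conj g).toMonoidHom H ≤ H) (hk : k ∈ H) :
    g * k * g⁻¹ ∈ H := by
  have h : (MulAut.conj g) k ∈ H := hmap ⟨k, hk, rfl⟩
  simpa [MulAut.conj_apply, mul_assoc] using h

lemma conjK {g k : AutT 3} (hg : g ∈ GG) (hk : k ∈ KK) : g * k * g⁻¹ ∈ KK :=
  conj_mem_of_map (mapK hg) hk

lemma conjKd {g k : AutT 3} (hg : g ∈ GG) (hk : k ∈ ⁅KK, KK⁆) :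
    g * k * g⁻¹ ∈ ⁅KK, KK⁆ :=
  conj_mem_of_map (mapKd hg) hk

lemma conjKdd {g k : AutT 3} (hg : g ∈ GG)
    (hk : k ∈ ⁅(⁅KK, KK⁆ : Subgroup (AutT 3)), ⁅KK, KK⁆⁆) :
    g * k * g⁻¹ ∈ ⁅(⁅KK, KK⁆ : Subgroup (AutT 3)), ⁅KK, KK⁆⁆ :=
  conj_mem_of_map (mapKdd hg) hk

lemma conjNN {g k : AutT 3} (hg : g ∈ GG)
    (hk : k ∈ ⁅(⁅KK, KK⁆ : Subgroup (AutT 3)), KK⁆) :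
    g * k * g⁻¹ ∈ ⁅(⁅KK, KK⁆ : Subgroup (AutT 3)), KK⁆ :=
  conj_mem_of_map (mapNN hg) hk

/-- The subgroup of elements admitting a "lift" `tri g s t ∈ G`. -/
def PP : Subgroup (AutT 3) where
  carrier := {g | ∃ s t, tri g s t ∈ GG}
  one_mem' := ⟨1, 1, by rw [tri_one]; exact one_mem _⟩
  mul_mem' := by
    rintro x y ⟨s, t, hx⟩ ⟨s', t', hy⟩
    exact ⟨s * s', t * t', by rw [← tri_mul]; exact mul_mem hx hy⟩
  inv_mem' := by
    rintro x ⟨s, t, hx⟩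
    exact ⟨s⁻¹, t⁻¹, by rw [← tri_inv]; exact inv_mem hx⟩

lemma G_le_P : GG ≤ PP := by
  rw [GG_eq, closure_le]
  rintro x (rfl | rfl)
  · exact ⟨aA, bB, by show tri aA aA bB ∈ GG; rw [← b_tri]; exact hbG⟩
  · refine ⟨aA, aA, show tri bB aA aA ∈ GG from ?_⟩
    have h : tri bB aA aA = aA * bB * aA⁻¹ := by
      conv_rhs => rw [b_tri]
      rw [conj_a_tri]
    rw [h]
    exact mul_mem (mul_mem haG hbG) (inv_mem haG)

end GGSP
namespace GGSP
open Subgroup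

def u : AutT 3 := ⁅aA, bB⁆
def ua : AutT 3 := aA * u * aA⁻¹
def uaa : AutT 3 := aA⁻¹ * u * aA
def Y : AutT 3 := ⁅cc, aA * cc * aA⁻¹⁆
def e₂ : AutT 3 := ⁅cc, (aA * cc * aA⁻¹)⁻¹⁆

lemma cci : cc⁻¹ = aA * bB⁻¹ := by
  show (bB * aA⁻¹)⁻¹ = _
  rw [mul_inv_rev, inv_inv]

lemma conj_a_b : aA * bB * aA⁻¹ = tri bB aA aA := by
  conv_lhs => rw [b_tri]
  rw [conj_a_tri]

lemma u_tri : u = tri cc 1 cc⁻¹ := by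
  have h : u = (aA * bB * aA⁻¹) * bB⁻¹ := by rw [u, commutatorElement_def]
  rw [h, conj_a_b]
  conv_lhs => rw [bi_tri]
  rw [tri_mul, cci]
  congr 1 <;> first | rfl | group

lemma ua_tri : ua = tri cc⁻¹ cc 1 := by
  rw [ua, u_tri, conj_a_tri]

lemma uaa_tri : uaa = tri 1 cc⁻¹ cc := by
  rw [uaa, u_tri, conj_ai_tri]

lemma c_norm : cc = tri aA aA bB * aA⁻¹ := by
  show bB * aA⁻¹ = _
  conv_lhs => rw [b_tri]

lemma Y_tri : Y = tri (aA * bB⁻¹) (aA⁻¹ * (bB⁻¹ * aA⁻¹)) (bB⁻¹ * aA) := by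
  rw [Y, commutatorElement_def]
  simp only [c_norm, mul_inv_rev, inv_inv, tri_inv, mul_assoc,
    a_tri, a_tri_assoc, ai_tri, ai_tri_assoc, tri_mul, tri_mul_assoc,
    one_mul, mul_one, inv_one,
    inv_mul_cancel_left, mul_inv_cancel_left, inv_mul_cancel, mul_inv_cancel,
    aa, aa_assoc, aia, aia_assoc, bb, bb_assoc, bib, bib_assoc]

/-- Key lemma: commutators of lifted conjugates of `u` and `u^a` land on the
first coordinate. -/
lemma N1 (g₀ s t g₀' s' t' : AutT 3) :
    ⁅tri g₀ s t * u * (tri g₀ s t)⁻¹, tri g₀' s' t' * ua * (tri g₀' s' t')⁻¹⁆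
      = tri ⁅g₀ * cc * g₀⁻¹, g₀' * cc⁻¹ * g₀'⁻¹⁆ 1 1 := by
  rw [commutatorElement_def, commutatorElement_def, u_tri, ua_tri]
  simp only [tri_inv, mul_assoc, tri_mul, tri_mul_assoc]
  congr 1 <;> group

/-- `b (u^{a²}) b⁻¹ = Y u`. -/
lemma N2 : bB * uaa * bB⁻¹ = Y * u := by
  rw [uaa, u, Y, commutatorElement_def, commutatorElement_def]
  show bB * (aA⁻¹ * (aA * bB * aA⁻¹ * bB⁻¹) * aA) * bB⁻¹ = _
  simp only [cc, mul_inv_rev, inv_inv, mul_assoc,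
    one_mul, mul_one, inv_one,
    inv_mul_cancel_left, mul_inv_cancel_left, inv_mul_cancel, mul_inv_cancel,
    aa, aa_assoc, aia, aia_assoc, bb, bb_assoc, bib, bib_assoc]

/-- `b u b⁻¹ = ((Y⁻¹,1,1)(1,1,e₂) Y^a) u^a`. -/
lemma N3 : bB * u * bB⁻¹
    = tri Y⁻¹ 1 1 * (tri 1 1 e₂ * ((aA * Y * aA⁻¹) * ua)) := by
  rw [u_tri, conj_b_tri]
  nth_rewrite 2 [Y_tri]
  rw [conj_a_tri, ua_tri]
  simp only [tri_inv, mul_assoc, tri_mul, tri_mul_assoc]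
  congr 1 <;>
    simp only [cc, e₂, Y, commutatorElement_def, mul_inv_rev, inv_inv, mul_assoc,
      one_mul, mul_one, inv_one,
      inv_mul_cancel_left, mul_inv_cancel_left, inv_mul_cancel, mul_inv_cancel,
      aa, aa_assoc, aia, aia_assoc, bb, bb_assoc, bib, bib_assoc]

/-- `b u^a b⁻¹ = ((1,Y⁻¹,1) Y^{a⁻¹}) u^{a²}`. -/
lemma N4 : bB * ua * bB⁻¹ = tri 1 Y⁻¹ 1 * ((aA⁻¹ * Y * aA) * uaa) := by
  rw [ua_tri, conj_b_tri]
  nth_rewrite 2 [Y_tri]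
  rw [conj_ai_tri, uaa_tri]
  simp only [tri_inv, mul_assoc, tri_mul, tri_mul_assoc]
  congr 1 <;>
    simp only [cc, e₂, Y, commutatorElement_def, mul_inv_rev, inv_inv, mul_assoc,
      one_mul, mul_one, inv_one,
      inv_mul_cancel_left, mul_inv_cancel_left, inv_mul_cancel, mul_inv_cancel,
      aa, aa_assoc, aia, aia_assoc, bb, bb_assoc, bib, bib_assoc]

end GGSP
namespace GGSP
open Subgroup

lemma u_eq : u = (aA * cc * aA⁻¹) * cc⁻¹ := by
  rw [u, cc, commutatorElement_def]; group

lemma huK : u ∈ KK := by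
  rw [u_eq]; exact mul_mem (conjK haG hcK) (inv_mem hcK)

lemma huaK : ua ∈ KK := conjK haG huK
lemma huaaK : uaa ∈ KK := conjK (inv_mem haG) huK

lemma huG : u ∈ GG := K_le_G huK
lemma huaG : ua ∈ GG := K_le_G huaK
lemma huaaG : uaa ∈ GG := K_le_G huaaK

/-- `T' = {k | (k,1,1) ∈ K'}`. -/
def TT : Subgroup (AutT 3) where
  carrier := {k | tri k 1 1 ∈ ⁅KK, KK⁆}
  one_mem' := by
    have h : tri 1 1 1 ∈ (⁅KK, KK⁆ : Subgroup (AutT 3)) := by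
      rw [tri_one]; exact one_mem _
    exact h
  mul_mem' := by
    intro x y hx hy
    show tri (x * y) 1 1 ∈ (⁅KK, KK⁆ : Subgroup (AutT 3))
    have h := mul_mem (show tri x 1 1 ∈ (⁅KK, KK⁆ : Subgroup (AutT 3)) from hx)
      (show tri y 1 1 ∈ (⁅KK, KK⁆ : Subgroup (AutT 3)) from hy)
    rw [tri_mul] at h
    simpa using h
  inv_mem' := by
    intro x hx
    show tri x⁻¹ 1 1 ∈ (⁅KK, KK⁆ : Subgroup (AutT 3))
    have h := inv_mem (show tri x 1 1 ∈ (⁅KK, KK⁆ : Subgroup (AutT 3)) from hx)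
    rw [tri_inv] at h
    simpa using h

lemma mem_TT {k : AutT 3} : k ∈ TT ↔ tri k 1 1 ∈ ⁅KK, KK⁆ := Iff.rfl

lemma conj_tri_lift (g s t x : AutT 3) :
    tri g s t * tri x 1 1 * (tri g s t)⁻¹ = tri (g * x * g⁻¹) 1 1 := by
  rw [tri_inv, tri_mul, tri_mul]
  congr 1 <;> group

lemma TT_conj {g k : AutT 3} (hg : g ∈ GG) (hk : k ∈ TT) : g * k * g⁻¹ ∈ TT := by
  obtain ⟨s, t, hl⟩ := G_le_P hg
  rw [mem_TT, ← conj_tri_lift g s t k]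
  exact conjKd hl (mem_TT.1 hk)

lemma TT_flip {x y : AutT 3} (hx : x ∈ GG) (h : ⁅y, x⁻¹⁆ ∈ TT) : ⁅y, x⁆ ∈ TT := by
  have e : ⁅y, x⁆ = (x * ⁅y, x⁻¹⁆ * x⁻¹)⁻¹ := by
    rw [commutatorElement_def, commutatorElement_def]; group
  rw [e]
  exact inv_mem (TT_conj hx h)

lemma gen_TT {g h : AutT 3} (hg : g ∈ GG) (hh : h ∈ GG) :
    ⁅g * cc * g⁻¹, h * cc * h⁻¹⁆ ∈ TT := by
  apply TT_flip (mul_mem (mul_mem hh hcG) (inv_mem hh))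
  obtain ⟨s, t, hgs⟩ := G_le_P hg
  obtain ⟨s', t', hhs⟩ := G_le_P hh
  have hx₁ : tri g s t * u * (tri g s t)⁻¹ ∈ KK := conjK hgs huK
  have hx₂ : tri h s' t' * ua * (tri h s' t')⁻¹ ∈ KK := conjK hhs huaK
  have hcm := Subgroup.commutator_mem_commutator hx₁ hx₂
  rw [N1] at hcm
  have e : (h * cc * h⁻¹)⁻¹ = h * cc⁻¹ * h⁻¹ := by group
  rw [mem_TT, e]
  exact hcm

lemma comm_in_TT : ∀ x ∈ KK, ∀ y ∈ KK, ⁅x, y⁆ ∈ TT := by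
  intro x hx
  rw [KK_eq] at hx
  induction hx using Subgroup.closure_induction with
  | mem x hxm =>
      obtain ⟨g, hg, rfl⟩ := hxm
      intro y hy
      rw [KK_eq] at hy
      induction hy using Subgroup.closure_induction with
      | mem y hym =>
          obtain ⟨h, hh, rfl⟩ := hym
          exact gen_TT hg hh
      | one => rw [commutatorElement_one_right]; exact one_mem _
      | mul y₁ y₂ hy₁ hy₂ ih₁ ih₂ =>
          have hy₁K : y₁ ∈ KK := by rw [KK_eq]; exact hy₁
          have e : ⁅g * (aut_b 3 * (aut_a 3)⁻¹) * g⁻¹, y₁ * y₂⁆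
              = ⁅g * (aut_b 3 * (aut_a 3)⁻¹) * g⁻¹, y₁⁆
                * (y₁ * ⁅g * (aut_b 3 * (aut_a 3)⁻¹) * g⁻¹, y₂⁆ * y₁⁻¹) := by
            simp only [commutatorElement_def]; group
          rw [e]
          exact mul_mem ih₁ (TT_conj (K_le_G hy₁K) ih₂)
      | inv y hy ih =>
          have hyK : y ∈ KK := by rw [KK_eq]; exact hy
          have e : ⁅g * (aut_b 3 * (aut_a 3)⁻¹) * g⁻¹, y⁻¹⁆
              = (y⁻¹ * ⁅g * (aut_b 3 * (aut_a 3)⁻¹) * g⁻¹, y⁆ * y)⁻¹ := by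
            simp only [commutatorElement_def]; group
          rw [e]
          exact inv_mem (TT_conj (inv_mem (K_le_G hyK)) ih)
  | one =>
      intro y hy
      rw [commutatorElement_one_left]; exact one_mem _
  | mul x₁ x₂ hx₁ hx₂ ih₁ ih₂ =>
      intro y hy
      have hx₁K : x₁ ∈ KK := by rw [KK_eq]; exact hx₁
      have e : ⁅x₁ * x₂, y⁆ = (x₁ * ⁅x₂, y⁆ * x₁⁻¹) * ⁅x₁, y⁆ := by
        simp only [commutatorElement_def]; group
      rw [e]
      exact mul_mem (TT_conj (K_le_G hx₁K) (ih₂ y hy)) (ih₁ y hy)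
  | inv x hx ih =>
      intro y hy
      have hxK : x ∈ KK := by rw [KK_eq]; exact hx
      have e : ⁅x⁻¹, y⁆ = (x⁻¹ * ⁅x, y⁆ * x)⁻¹ := by
        simp only [commutatorElement_def]; group
      rw [e]
      exact inv_mem (TT_conj (inv_mem (K_le_G hxK)) (ih y hy))

lemma Kd_le_TT : ⁅KK, KK⁆ ≤ TT := Subgroup.commutator_le.2 comm_in_TT

lemma F1 {k : AutT 3} (hk : k ∈ ⁅KK, KK⁆) : tri k 1 1 ∈ ⁅KK, KK⁆ := Kd_le_TT hk

lemma F1b {k : AutT 3} (hk : k ∈ ⁅KK, KK⁆) : tri 1 k 1 ∈ ⁅KK, KK⁆ := by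
  rw [← conj_a_tri k 1 1]
  exact conjKd haG (F1 hk)

lemma F1c {k : AutT 3} (hk : k ∈ ⁅KK, KK⁆) : tri 1 1 k ∈ ⁅KK, KK⁆ := by
  rw [← conj_ai_tri k 1 1]
  exact conjKd (inv_mem haG) (F1 hk)

end GGSP
namespace GGSP
open Subgroup

lemma Y_Kd : Y ∈ ⁅KK, KK⁆ :=
  Subgroup.commutator_mem_commutator hcK (conjK haG hcK)

lemma e₂_Kd : e₂ ∈ ⁅KK, KK⁆ :=
  Subgroup.commutator_mem_commutator hcK (inv_mem (conjK haG hcK))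

/-- `R = {k | ∃ s t, (k,s,t) ∈ K'}`. -/
def RR : Subgroup (AutT 3) where
  carrier := {k | ∃ s t, tri k s t ∈ ⁅KK, KK⁆}
  one_mem' := ⟨1, 1, by rw [tri_one]; exact one_mem _⟩
  mul_mem' := by
    rintro x y ⟨s, t, hx⟩ ⟨s', t', hy⟩
    exact ⟨s * s', t * t', by rw [← tri_mul]; exact mul_mem hx hy⟩
  inv_mem' := by
    rintro x ⟨s, t, hx⟩
    exact ⟨s⁻¹, t⁻¹, by rw [← tri_inv]; exact inv_mem hx⟩

lemma conj_tri_tri (g s t x y z : AutT 3) :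
    tri g s t * tri x y z * (tri g s t)⁻¹
      = tri (g * x * g⁻¹) (s * y * s⁻¹) (t * z * t⁻¹) := by
  rw [tri_inv, tri_mul, tri_mul]

lemma RR_conj {g k : AutT 3} (hg : g ∈ GG) (hk : k ∈ RR) : g * k * g⁻¹ ∈ RR := by
  obtain ⟨s, t, hl⟩ := G_le_P hg
  obtain ⟨s', t', hm⟩ := hk
  exact ⟨s * s' * s⁻¹, t * t' * t⁻¹, by rw [← conj_tri_tri]; exact conjKd hl hm⟩

lemma hciR : cc⁻¹ ∈ RR := by
  refine ⟨aA⁻¹ * (bB⁻¹ * aA⁻¹), bB⁻¹ * aA, ?_⟩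
  rw [cci, ← Y_tri]
  exact Y_Kd

lemma hcR : cc ∈ RR := by
  have h := inv_mem hciR
  simpa using h

lemma K_le_R : KK ≤ RR := by
  rw [KK_eq, closure_le]
  rintro x ⟨g, hg, rfl⟩
  exact RR_conj hg hcR

lemma F2 {k : AutT 3} (hk : k ∈ KK) : ∃ s t, tri k s t ∈ ⁅KK, KK⁆ := K_le_R hk

lemma decompG : ∀ g ∈ GG, ∃ k ∈ KK, ∃ m : ℤ, g = k * aA ^ m := by
  intro g hg
  rw [GG_eq] at hg
  induction hg using Subgroup.closure_induction with
  | mem x hxm =>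
      rcases hxm with rfl | rfl
      · exact ⟨1, one_mem _, 1, by show aA = 1 * aA ^ 1; group⟩
      · refine ⟨cc, hcK, 1, ?_⟩
        show bB = cc * aA ^ 1
        rw [cc]
        group
  | one => exact ⟨1, one_mem _, 0, by group⟩
  | mul x y _ _ ihx ihy =>
      obtain ⟨k₁, hk₁, m, rfl⟩ := ihx
      obtain ⟨k₂, hk₂, n, rfl⟩ := ihy
      exact ⟨k₁ * (aA ^ m * k₂ * (aA ^ m)⁻¹),
        mul_mem hk₁ (conjK (zpow_mem haG m) hk₂), m + n, by group⟩
  | inv x _ ihx =>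
      obtain ⟨k, hk, m, rfl⟩ := ihx
      exact ⟨(aA ^ m)⁻¹ * k⁻¹ * aA ^ m,
        conjK (inv_mem (zpow_mem haG m)) (inv_mem hk), -m, by group⟩

lemma Gd_le_K : ⁅GG, GG⁆ ≤ KK := by
  rw [Subgroup.commutator_le]
  intro g hg h hh
  obtain ⟨k₁, hk₁, m, rfl⟩ := decompG g hg
  obtain ⟨k₂, hk₂, n, rfl⟩ := decompG h hh
  have e : ⁅k₁ * aA ^ m, k₂ * aA ^ n⁆
      = k₁ * (aA ^ m * k₂ * (aA ^ m)⁻¹) * (aA ^ n * k₁⁻¹ * (aA ^ n)⁻¹) * k₂⁻¹ := by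
    rw [commutatorElement_def]; group
  rw [e]
  exact mul_mem (mul_mem (mul_mem hk₁ (conjK (zpow_mem haG m) hk₂))
    (conjK (zpow_mem haG n) (inv_mem hk₁))) (inv_mem hk₂)

end GGSP
namespace GGSP
open Subgroup

/-- `A = ⟨u, u^a, u^{a²}⟩`. -/
def AAsub : Subgroup (AutT 3) := Subgroup.closure {u, ua, uaa}

lemma comm_u_ua : Commute u ua := by
  show u * ua = ua * u
  rw [u_tri, ua_tri, tri_mul, tri_mul]
  congr 1 <;> group

lemma comm_u_uaa : Commute u uaa := by
  show u * uaa = uaa * u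
  rw [u_tri, uaa_tri, tri_mul, tri_mul]
  congr 1 <;> group

lemma comm_ua_uaa : Commute ua uaa := by
  show ua * uaa = uaa * ua
  rw [ua_tri, uaa_tri, tri_mul, tri_mul]
  congr 1 <;> group

lemma AA_comm : ∀ v₁ ∈ AAsub, ∀ v₂ ∈ AAsub, Commute v₁ v₂ := by
  intro v₁ hv₁
  induction hv₁ using Subgroup.closure_induction with
  | mem x hxm =>
      intro v₂ hv₂
      induction hv₂ using Subgroup.closure_induction with
      | mem y hym =>
          rcases hxm with rfl | rfl | rfl <;> rcases hym with rfl | rfl | rfl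
          · exact Commute.refl _
          · exact comm_u_ua
          · exact comm_u_uaa
          · exact comm_u_ua.symm
          · exact Commute.refl _
          · exact comm_ua_uaa
          · exact comm_u_uaa.symm
          · exact comm_ua_uaa.symm
          · exact Commute.refl _
      | one => exact Commute.one_right _
      | mul y₁ y₂ _ _ ih₁ ih₂ => exact Commute.mul_right ih₁ ih₂
      | inv y _ ih => exact Commute.inv_right ih
  | one => exact fun v₂ _ => Commute.one_left _
  | mul x₁ x₂ _ _ ih₁ ih₂ => exact fun v₂ h₂ => Commute.mul_left (ih₁ v₂ h₂) (ih₂ v₂ h₂)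
  | inv x _ ih => exact fun v₂ h₂ => Commute.inv_left (ih v₂ h₂)

lemma AA_le_K : AAsub ≤ KK := by
  rw [AAsub, closure_le]
  rintro x (rfl | rfl | rfl)
  · exact huK
  · exact huaK
  · exact huaaK

lemma u_AA : u ∈ AAsub := subset_closure (by left; rfl)
lemma ua_AA : ua ∈ AAsub := subset_closure (by right; left; rfl)
lemma uaa_AA : uaa ∈ AAsub := subset_closure (by right; right; rfl)

/-- `V = K'·A`. -/
def VV : Subgroup (AutT 3) where
  carrier := {x | ∃ k ∈ (⁅KK, KK⁆ : Subgroup (AutT 3)), ∃ v ∈ AAsub, x = k * v}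
  one_mem' := ⟨1, one_mem _, 1, one_mem _, by group⟩
  mul_mem' := by
    rintro x y ⟨k₁, hk₁, v₁, hv₁, rfl⟩ ⟨k₂, hk₂, v₂, hv₂, rfl⟩
    exact ⟨k₁ * (v₁ * k₂ * v₁⁻¹),
      mul_mem hk₁ (conjKd (K_le_G (AA_le_K hv₁)) hk₂),
      v₁ * v₂, mul_mem hv₁ hv₂, by group⟩
  inv_mem' := by
    rintro x ⟨k, hk, v, hv, rfl⟩
    exact ⟨v⁻¹ * k⁻¹ * v,
      conjKd (inv_mem (K_le_G (AA_le_K hv))) (inv_mem hk),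
      v⁻¹, inv_mem hv, by group⟩

lemma mem_VV {x : AutT 3} :
    x ∈ VV ↔ ∃ k ∈ (⁅KK, KK⁆ : Subgroup (AutT 3)), ∃ v ∈ AAsub, x = k * v := Iff.rfl

lemma conj_a_AA {v : AutT 3} (hv : v ∈ AAsub) : aA * v * aA⁻¹ ∈ AAsub := by
  induction hv using Subgroup.closure_induction with
  | mem x hxm =>
      rcases hxm with rfl | rfl | rfl
      · exact ua_AA
      · have e : aA * ua * aA⁻¹ = uaa := by
          rw [ua, uaa]
          simp only [mul_assoc, aa_assoc, aa, aia, aia_assoc,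
            inv_mul_cancel_left, mul_inv_cancel_left, inv_mul_cancel, mul_inv_cancel,
            one_mul, mul_one]
        rw [e]; exact uaa_AA
      · have e : aA * uaa * aA⁻¹ = u := by
          rw [uaa]
          simp only [mul_assoc, aa_assoc, aa, aia, aia_assoc,
            inv_mul_cancel_left, mul_inv_cancel_left, inv_mul_cancel, mul_inv_cancel,
            one_mul, mul_one]
        rw [e]; exact u_AA
  | one => simpa using one_mem _
  | mul x₁ x₂ _ _ ih₁ ih₂ =>
      have e : aA * (x₁ * x₂) * aA⁻¹ = (aA * x₁ * aA⁻¹) * (aA * x₂ * aA⁻¹) := by group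
      rw [e]; exact mul_mem ih₁ ih₂
  | inv x _ ih =>
      have e : aA * x⁻¹ * aA⁻¹ = (aA * x * aA⁻¹)⁻¹ := by group
      rw [e]; exact inv_mem ih

lemma conj_ai_AA {v : AutT 3} (hv : v ∈ AAsub) : aA⁻¹ * v * aA ∈ AAsub := by
  induction hv using Subgroup.closure_induction with
  | mem x hxm =>
      rcases hxm with rfl | rfl | rfl
      · exact uaa_AA
      · have e : aA⁻¹ * ua * aA = u := by
          rw [ua]
          simp only [mul_assoc, aa_assoc, aa, aia, aia_assoc,
            inv_mul_cancel_left, mul_inv_cancel_left, inv_mul_cancel, mul_inv_cancel,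
            one_mul, mul_one]
        rw [e]; exact u_AA
      · have e : aA⁻¹ * uaa * aA = ua := by
          rw [uaa, ua]
          simp only [mul_assoc, aa_assoc, aa, aia, aia_assoc,
            inv_mul_cancel_left, mul_inv_cancel_left, inv_mul_cancel, mul_inv_cancel,
            one_mul, mul_one]
        rw [e]; exact ua_AA
  | one => simpa using one_mem _
  | mul x₁ x₂ _ _ ih₁ ih₂ =>
      have e : aA⁻¹ * (x₁ * x₂) * aA = (aA⁻¹ * x₁ * aA) * (aA⁻¹ * x₂ * aA) := by group
      rw [e]; exact mul_mem ih₁ ih₂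
  | inv x _ ih =>
      have e : aA⁻¹ * x⁻¹ * aA = (aA⁻¹ * x * aA)⁻¹ := by group
      rw [e]; exact inv_mem ih

end GGSP
namespace GGSP
open Subgroup

lemma k₁_Kd : tri Y⁻¹ 1 1 * (tri 1 1 e₂ * (aA * Y * aA⁻¹)) ∈ ⁅KK, KK⁆ :=
  mul_mem (F1 (inv_mem Y_Kd)) (mul_mem (F1c e₂_Kd) (conjKd haG Y_Kd))

lemma k₂_Kd : tri 1 Y⁻¹ 1 * (aA⁻¹ * Y * aA) ∈ ⁅KK, KK⁆ :=
  mul_mem (F1b (inv_mem Y_Kd)) (conjKd (inv_mem haG) Y_Kd)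

lemma conj_b_u : bB * u * bB⁻¹ ∈ VV := by
  refine ⟨tri Y⁻¹ 1 1 * (tri 1 1 e₂ * (aA * Y * aA⁻¹)), k₁_Kd, ua, ua_AA, ?_⟩
  rw [N3]; group

lemma conj_b_ua : bB * ua * bB⁻¹ ∈ VV := by
  refine ⟨tri 1 Y⁻¹ 1 * (aA⁻¹ * Y * aA), k₂_Kd, uaa, uaa_AA, ?_⟩
  rw [N4]; group

lemma conj_b_uaa : bB * uaa * bB⁻¹ ∈ VV := by
  exact ⟨Y, Y_Kd, u, u_AA, N2⟩

lemma conj_bi_u : bB⁻¹ * u * bB ∈ VV := by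
  refine ⟨bB⁻¹ * Y⁻¹ * bB, conjKd (inv_mem hbG) (inv_mem Y_Kd), uaa, uaa_AA, ?_⟩
  have h : uaa = bB⁻¹ * (Y * u) * bB := by rw [← N2]; group
  rw [h]; group

lemma conj_bi_ua : bB⁻¹ * ua * bB ∈ VV := by
  refine ⟨bB⁻¹ * (tri Y⁻¹ 1 1 * (tri 1 1 e₂ * (aA * Y * aA⁻¹)))⁻¹ * bB,
    conjKd (inv_mem hbG) (inv_mem k₁_Kd), u, u_AA, ?_⟩
  have h : ua = (tri Y⁻¹ 1 1 * (tri 1 1 e₂ * (aA * Y * aA⁻¹)))⁻¹ * (bB * u * bB⁻¹) := by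
    rw [N3]; group
  rw [h]; group

lemma conj_bi_uaa : bB⁻¹ * uaa * bB ∈ VV := by
  refine ⟨bB⁻¹ * (tri 1 Y⁻¹ 1 * (aA⁻¹ * Y * aA))⁻¹ * bB,
    conjKd (inv_mem hbG) (inv_mem k₂_Kd), ua, ua_AA, ?_⟩
  have h : uaa = (tri 1 Y⁻¹ 1 * (aA⁻¹ * Y * aA))⁻¹ * (bB * ua * bB⁻¹) := by
    rw [N4]; group
  rw [h]; group

lemma conj_a_VV {x : AutT 3} (hx : x ∈ VV) : aA * x * aA⁻¹ ∈ VV := by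
  obtain ⟨k, hk, v, hv, rfl⟩ := hx
  exact ⟨aA * k * aA⁻¹, conjKd haG hk, aA * v * aA⁻¹, conj_a_AA hv, by group⟩

lemma conj_ai_VV {x : AutT 3} (hx : x ∈ VV) : aA⁻¹ * x * aA ∈ VV := by
  obtain ⟨k, hk, v, hv, rfl⟩ := hx
  exact ⟨aA⁻¹ * k * aA, conjKd (inv_mem haG) hk, aA⁻¹ * v * aA, conj_ai_AA hv, by group⟩

lemma conj_b_VV {x : AutT 3} (hx : x ∈ VV) : bB * x * bB⁻¹ ∈ VV := by
  obtain ⟨k, hk, v, hv, rfl⟩ := hx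
  have e : bB * (k * v) * bB⁻¹ = (bB * k * bB⁻¹) * (bB * v * bB⁻¹) := by group
  rw [e]
  refine mul_mem ⟨bB * k * bB⁻¹, conjKd hbG hk, 1, one_mem _, by group⟩ ?_
  clear e
  induction hv using Subgroup.closure_induction with
  | mem y hym => rcases hym with rfl | rfl | rfl
                 · exact conj_b_u
                 · exact conj_b_ua
                 · exact conj_b_uaa
  | one => exact ⟨1, one_mem _, 1, one_mem _, by group⟩
  | mul y₁ y₂ _ _ ih₁ ih₂ =>
      have e2 : bB * (y₁ * y₂) * bB⁻¹ = (bB * y₁ * bB⁻¹) * (bB * y₂ * bB⁻¹) := by group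
      rw [e2]; exact mul_mem ih₁ ih₂
  | inv y _ ih =>
      have e2 : bB * y⁻¹ * bB⁻¹ = (bB * y * bB⁻¹)⁻¹ := by group
      rw [e2]; exact inv_mem ih

lemma conj_bi_VV {x : AutT 3} (hx : x ∈ VV) : bB⁻¹ * x * bB ∈ VV := by
  obtain ⟨k, hk, v, hv, rfl⟩ := hx
  have e : bB⁻¹ * (k * v) * bB = (bB⁻¹ * k * bB) * (bB⁻¹ * v * bB) := by group
  rw [e]
  refine mul_mem ⟨bB⁻¹ * k * bB, conjKd (inv_mem hbG) hk, 1, one_mem _, by group⟩ ?_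
  clear e
  induction hv using Subgroup.closure_induction with
  | mem y hym => rcases hym with rfl | rfl | rfl
                 · exact conj_bi_u
                 · exact conj_bi_ua
                 · exact conj_bi_uaa
  | one => exact ⟨1, one_mem _, 1, one_mem _, by group⟩
  | mul y₁ y₂ _ _ ih₁ ih₂ =>
      have e2 : bB⁻¹ * (y₁ * y₂) * bB = (bB⁻¹ * y₁ * bB) * (bB⁻¹ * y₂ * bB) := by group
      rw [e2]; exact mul_mem ih₁ ih₂
  | inv y _ ih =>
      have e2 : bB⁻¹ * y⁻¹ * bB = (bB⁻¹ * y * bB)⁻¹ := by group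
      rw [e2]; exact inv_mem ih

lemma VV_conjG : ∀ g ∈ GG, ∀ x ∈ VV, g * x * g⁻¹ ∈ VV := by
  intro g hg
  rw [GG_eq] at hg
  have H : (∀ x ∈ VV, g * x * g⁻¹ ∈ VV) ∧ (∀ x ∈ VV, g⁻¹ * x * g ∈ VV) := by
    induction hg using Subgroup.closure_induction with
    | mem y hym =>
        rcases hym with rfl | rfl
        · exact ⟨fun x hx => conj_a_VV hx, fun x hx => conj_ai_VV hx⟩
        · exact ⟨fun x hx => conj_b_VV hx, fun x hx => conj_bi_VV hx⟩
    | one => constructor <;> intro x hx <;> simpa using hx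
    | mul y₁ y₂ _ _ ih₁ ih₂ =>
        constructor
        · intro x hx
          have e : (y₁ * y₂) * x * (y₁ * y₂)⁻¹ = y₁ * (y₂ * x * y₂⁻¹) * y₁⁻¹ := by group
          rw [e]; exact ih₁.1 _ (ih₂.1 x hx)
        · intro x hx
          have e : (y₁ * y₂)⁻¹ * x * (y₁ * y₂) = y₂⁻¹ * (y₁⁻¹ * x * y₁) * y₂ := by group
          rw [e]; exact ih₂.2 _ (ih₁.2 x hx)
    | inv y _ ih =>
        constructor
        · intro x hx; exact ih.2 x hx
        · intro x hx
          have e : y⁻¹⁻¹ * x * y⁻¹ = y * x * y⁻¹ := by group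
          rw [e]; exact ih.1 x hx
  exact H.1

lemma comm_ba_eq : ⁅bB, aA⁆ = u⁻¹ := by
  rw [u, commutatorElement_def, commutatorElement_def]; group

lemma Gd_le_V : ⁅GG, GG⁆ ≤ VV := by
  rw [Subgroup.commutator_le]
  intro x hx
  rw [GG_eq] at hx
  induction hx using Subgroup.closure_induction with
  | mem x hxm =>
      intro y hy
      rw [GG_eq] at hy
      induction hy using Subgroup.closure_induction with
      | mem y hym =>
          rcases hxm with rfl | rfl <;> rcases hym with rfl | rfl
          · have e : ⁅aut_a 3, aut_a 3⁆ = 1 := by rw [commutatorElement_def]; group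
            rw [e]; exact one_mem _
          · have e : ⁅aut_a 3, aut_b 3⁆ = u := rfl
            rw [e]; exact ⟨1, one_mem _, u, u_AA, by group⟩
          · have e : ⁅aut_b 3, aut_a 3⁆ = u⁻¹ := comm_ba_eq
            rw [e]; exact inv_mem ⟨1, one_mem _, u, u_AA, by group⟩
          · have e : ⁅aut_b 3, aut_b 3⁆ = 1 := by rw [commutatorElement_def]; group
            rw [e]; exact one_mem _
      | one => rw [commutatorElement_one_right]; exact one_mem _
      | mul y₁ y₂ hy₁ _ ih₁ ih₂ =>
          have hy₁G : y₁ ∈ GG := by rw [GG_eq]; exact hy₁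
          have e : ⁅x, y₁ * y₂⁆ = ⁅x, y₁⁆ * (y₁ * ⁅x, y₂⁆ * y₁⁻¹) := by
            simp only [commutatorElement_def]; group
          rw [e]
          exact mul_mem ih₁ (VV_conjG y₁ hy₁G _ ih₂)
      | inv y hy ih =>
          have hyG : y ∈ GG := by rw [GG_eq]; exact hy
          have e : ⁅x, y⁻¹⁆ = (y⁻¹ * ⁅x, y⁆ * y)⁻¹ := by
            simp only [commutatorElement_def]; group
          rw [e]
          exact inv_mem (VV_conjG y⁻¹ (inv_mem hyG) _ ih)
  | one =>
      intro y hy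
      rw [commutatorElement_one_left]; exact one_mem _
  | mul x₁ x₂ hx₁ _ ih₁ ih₂ =>
      intro y hy
      have hx₁G : x₁ ∈ GG := by rw [GG_eq]; exact hx₁
      have e : ⁅x₁ * x₂, y⁆ = (x₁ * ⁅x₂, y⁆ * x₁⁻¹) * ⁅x₁, y⁆ := by
        simp only [commutatorElement_def]; group
      rw [e]
      exact mul_mem (VV_conjG x₁ hx₁G _ (ih₂ y hy)) (ih₁ y hy)
  | inv x hx ih =>
      intro y hy
      have hxG : x ∈ GG := by rw [GG_eq]; exact hx
      have e : ⁅x⁻¹, y⁆ = (x⁻¹ * ⁅x, y⁆ * x)⁻¹ := by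
        simp only [commutatorElement_def]; group
      rw [e]
      exact inv_mem (VV_conjG x⁻¹ (inv_mem hxG) _ (ih y hy))

end GGSP
namespace GGSP
open Subgroup

lemma Kd_le_K : (⁅KK, KK⁆ : Subgroup (AutT 3)) ≤ KK := by
  rw [Subgroup.commutator_le]
  intro g hg h hh
  rw [commutatorElement_def]
  exact mul_mem (mul_mem (mul_mem hg hh) (inv_mem hg)) (inv_mem hh)

/-- `G'' ≤ [K', K] = γ₃(K)`. -/
lemma Gdd_le_NN :
    (⁅(⁅GG, GG⁆ : Subgroup (AutT 3)), ⁅GG, GG⁆⁆ : Subgroup (AutT 3))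
      ≤ ⁅(⁅KK, KK⁆ : Subgroup (AutT 3)), KK⁆ := by
  rw [Subgroup.commutator_le]
  intro x hx y hy
  obtain ⟨k₁, hk₁, v₁, hv₁, rfl⟩ := Gd_le_V hx
  obtain ⟨k₂, hk₂, v₂, hv₂, rfl⟩ := Gd_le_V hy
  have hk₁G : k₁ ∈ GG := K_le_G (Kd_le_K hk₁)
  have hk₂G : k₂ ∈ GG := K_le_G (Kd_le_K hk₂)
  have hv₁K : v₁ ∈ KK := AA_le_K hv₁
  have hv₂K : v₂ ∈ KK := AA_le_K hv₂
  have hvv : ⁅v₁, v₂⁆ = 1 := by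
    have hc : v₁ * v₂ = v₂ * v₁ := AA_comm v₁ hv₁ v₂ hv₂
    rw [commutatorElement_def, hc]; group
  have e : ⁅k₁ * v₁, k₂ * v₂⁆
      = (k₁ * (⁅v₁, k₂⁆ * (k₂ * ⁅v₁, v₂⁆ * k₂⁻¹)) * k₁⁻¹)
        * (⁅k₁, k₂⁆ * (k₂ * ⁅k₁, v₂⁆ * k₂⁻¹)) := by
    simp only [commutatorElement_def]; group
  rw [e, hvv]
  have m1 : ⁅v₁, k₂⁆ ∈ ⁅(⁅KK, KK⁆ : Subgroup (AutT 3)), KK⁆ := by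
    have h := Subgroup.commutator_mem_commutator hk₂ hv₁K
    have e2 : ⁅v₁, k₂⁆ = ⁅k₂, v₁⁆⁻¹ := (commutatorElement_inv k₂ v₁).symm
    rw [e2]; exact inv_mem h
  have m2 : ⁅k₁, k₂⁆ ∈ ⁅(⁅KK, KK⁆ : Subgroup (AutT 3)), KK⁆ :=
    Subgroup.commutator_mem_commutator hk₁ (Kd_le_K hk₂)
  have m3 : ⁅k₁, v₂⁆ ∈ ⁅(⁅KK, KK⁆ : Subgroup (AutT 3)), KK⁆ :=
    Subgroup.commutator_mem_commutator hk₁ hv₂K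
  refine mul_mem (conjNN hk₁G ?_) (mul_mem m2 (conjNN hk₂G m3))
  have e3 : ⁅v₁, k₂⁆ * (k₂ * 1 * k₂⁻¹) = ⁅v₁, k₂⁆ := by group
  rw [e3]; exact m1

/-- γ₃(K) lands in K'' on the first coordinate. -/
lemma NN_first :
    ∀ n ∈ (⁅(⁅KK, KK⁆ : Subgroup (AutT 3)), KK⁆ : Subgroup (AutT 3)),
      tri n 1 1 ∈ ⁅(⁅KK, KK⁆ : Subgroup (AutT 3)), ⁅KK, KK⁆⁆ := by
  have key : ∀ x ∈ (⁅KK, KK⁆ : Subgroup (AutT 3)), ∀ k ∈ KK,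
      tri ⁅x, k⁆ 1 1 ∈ ⁅(⁅KK, KK⁆ : Subgroup (AutT 3)), ⁅KK, KK⁆⁆ := by
    intro x hx k hk
    obtain ⟨s, t, hy⟩ := F2 hk
    have h1 : tri x 1 1 ∈ (⁅KK, KK⁆ : Subgroup (AutT 3)) := F1 hx
    have e : ⁅tri x 1 1, tri k s t⁆ = tri ⁅x, k⁆ 1 1 := by
      simp only [commutatorElement_def, tri_inv, mul_assoc, tri_mul_assoc, tri_mul]
      congr 1 <;> group
    rw [← e]
    exact Subgroup.commutator_mem_commutator h1 hy
  -- M = {g | (g,1,1) ∈ K''} is a subgroup containing all ⁅x,k⁆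
  let MM : Subgroup (AutT 3) :=
    { carrier := {g | tri g 1 1 ∈ ⁅(⁅KK, KK⁆ : Subgroup (AutT 3)), ⁅KK, KK⁆⁆}
      one_mem' := by
        have h : tri 1 1 1 ∈ (⁅(⁅KK, KK⁆ : Subgroup (AutT 3)), ⁅KK, KK⁆⁆ : Subgroup (AutT 3)) := by
          rw [tri_one]; exact one_mem _
        exact h
      mul_mem' := by
        intro x y hx hy
        show tri (x * y) 1 1 ∈ (⁅(⁅KK, KK⁆ : Subgroup (AutT 3)), ⁅KK, KK⁆⁆ : Subgroup (AutT 3))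
        have h := mul_mem
          (show tri x 1 1 ∈ (⁅(⁅KK, KK⁆ : Subgroup (AutT 3)), ⁅KK, KK⁆⁆ : Subgroup (AutT 3)) from hx)
          (show tri y 1 1 ∈ (⁅(⁅KK, KK⁆ : Subgroup (AutT 3)), ⁅KK, KK⁆⁆ : Subgroup (AutT 3)) from hy)
        rw [tri_mul] at h
        simpa using h
      inv_mem' := by
        intro x hx
        show tri x⁻¹ 1 1 ∈ (⁅(⁅KK, KK⁆ : Subgroup (AutT 3)), ⁅KK, KK⁆⁆ : Subgroup (AutT 3))
        have h := inv_mem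
          (show tri x 1 1 ∈ (⁅(⁅KK, KK⁆ : Subgroup (AutT 3)), ⁅KK, KK⁆⁆ : Subgroup (AutT 3)) from hx)
        rw [tri_inv] at h
        simpa using h }
  have hle : (⁅(⁅KK, KK⁆ : Subgroup (AutT 3)), KK⁆ : Subgroup (AutT 3)) ≤ MM := by
    rw [Subgroup.commutator_le]
    intro g₁ hg₁ g₂ hg₂
    exact key g₁ hg₁ g₂ hg₂
  intro n hn
  exact hle hn

end GGSP

/-- Proposition 4.8: for the GGS-group `G` with constant defining
vector and `p = 3`, `ψ(K'') ⊇ G'' × G'' × G''` where `K = ⟨ba⁻¹⟩^G`: every tree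
automorphism whose three first-level sections lie in `G''` belongs to `K''`. -/
theorem stmt_14 :
    {f : AutT 3 | ∀ x : Fin 3, ∃ g ∈ ⁅⁅GGS 3, GGS 3⁆, ⁅GGS 3, GGS 3⁆⁆,
        ∀ w : Vert 3, (f : Equiv.Perm (Vert 3)) (x :: w)
          = x :: (g : Equiv.Perm (Vert 3)) w}
      ⊆ ((⁅⁅GGSK 3, GGSK 3⁆, ⁅GGSK 3, GGSK 3⁆⁆ : Subgroup (AutT 3)) : Set (AutT 3)) := by
  open GGSP in
  intro f hf
  obtain ⟨g₀, hg₀, h₀⟩ := hf 0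
  obtain ⟨g₁, hg₁, h₁⟩ := hf 1
  obtain ⟨g₂, hg₂, h₂⟩ := hf 2
  have hftri : f = GGSP.tri g₀ g₁ g₂ := by
    apply Subtype.ext; apply Equiv.ext; intro w
    cases w with
    | nil =>
        rw [GGSP.root_nil f]
        exact (GGSP.tri_nil _ _ _).symm
    | cons x w =>
        rw [GGSP.tri_cons]
        fin_cases x
        · simpa using h₀ w
        · simpa using h₁ w
        · simpa using h₂ w
  have m0 : GGSP.tri g₀ 1 1 ∈ ⁅(⁅GGSK 3, GGSK 3⁆ : Subgroup (AutT 3)), ⁅GGSK 3, GGSK 3⁆⁆ :=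
    GGSP.NN_first g₀ (GGSP.Gdd_le_NN hg₀)
  have m1 : GGSP.tri 1 g₁ 1 ∈ ⁅(⁅GGSK 3, GGSK 3⁆ : Subgroup (AutT 3)), ⁅GGSK 3, GGSK 3⁆⁆ := by
    rw [← GGSP.conj_a_tri g₁ 1 1]
    exact GGSP.conjKdd GGSP.haG (GGSP.NN_first g₁ (GGSP.Gdd_le_NN hg₁))
  have m2 : GGSP.tri 1 1 g₂ ∈ ⁅(⁅GGSK 3, GGSK 3⁆ : Subgroup (AutT 3)), ⁅GGSK 3, GGSK 3⁆⁆ := by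
    rw [← GGSP.conj_ai_tri g₂ 1 1]
    exact GGSP.conjKdd (inv_mem GGSP.haG) (GGSP.NN_first g₂ (GGSP.Gdd_le_NN hg₂))
  have hsplit : f = GGSP.tri g₀ 1 1 * (GGSP.tri 1 g₁ 1 * GGSP.tri 1 1 g₂) := by
    rw [hftri, GGSP.tri_mul, GGSP.tri_mul]
    congr 1 <;> group
  rw [hsplit]
  exact mul_mem m0 (mul_mem m1 m2)
end

section
/- Let G = ⟨a,b⟩ be the Basilica group acting on the binary tree, where a = (1,b) and b = (1,a)ε. Let A = ⟨a⟩^G and B = ⟨b⟩^G be the normal closures. Then G' = A ∩ B. -/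
section Basilica

/-- The two generators of the Basilica group, defined by mutual recursion:
`bas false` is the action of `a = (1, b)` and `bas true` is the action of
`b = (1, a)ε` on the binary tree. -/
def bas : Bool → List (Fin 2) → List (Fin 2)
  | _, [] => []
  | false, x :: w => if x = 0 then 0 :: w else 1 :: bas true w
  | true, x :: w => if x = 0 then 1 :: w else 0 :: bas false w

/-- The inverses of the two generators of the Basilica group. -/
def basI : Bool → List (Fin 2) → List (Fin 2)
  | _, [] => []
  | false, x :: w => if x = 0 then 0 :: w else 1 :: basI true w
  | true, x :: w => if x = 0 then 1 :: basI false w else 0 :: w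

theorem fin2_eq_one {x : Fin 2} (h : ¬ x = 0) : x = 1 := by omega

theorem basI_bas : ∀ (fl : Bool) (l : List (Fin 2)), basI fl (bas fl l) = l
  | false, [] => rfl
  | true, [] => rfl
  | false, x :: w => by
    by_cases h : x = 0
    · simp [bas, basI, h]
    · simp [bas, basI, h, fin2_eq_one h, basI_bas true w]
  | true, x :: w => by
    by_cases h : x = 0
    · simp [bas, basI, h]
    · simp [bas, basI, h, fin2_eq_one h, basI_bas false w]

theorem bas_basI : ∀ (fl : Bool) (l : List (Fin 2)), bas fl (basI fl l) = l
  | false, [] => rfl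
  | true, [] => rfl
  | false, x :: w => by
    by_cases h : x = 0
    · simp [bas, basI, h]
    · simp [bas, basI, h, fin2_eq_one h, bas_basI true w]
  | true, x :: w => by
    by_cases h : x = 0
    · simp [bas, basI, h, bas_basI false w]
    · simp [bas, basI, h, fin2_eq_one h]

/-- The generators of the Basilica group as permutations of the vertex set. -/
def basPerm (fl : Bool) : Equiv.Perm (Vert 2) :=
  ⟨bas fl, basI fl, basI_bas fl, bas_basI fl⟩

theorem bas_append : ∀ (fl : Bool) (v : Vert 2) (i : Fin 2),
    ∃ j, bas fl (v ++ [i]) = bas fl v ++ [j]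
  | false, [], i => by
    by_cases h : i = 0
    · exact ⟨i, by simp [bas, h]⟩
    · exact ⟨i, by simp [bas, h, fin2_eq_one h]⟩
  | true, [], i => by
    by_cases h : i = 0
    · exact ⟨1, by simp [bas, h]⟩
    · exact ⟨0, by simp [bas, h, fin2_eq_one h]⟩
  | false, x :: w, i => by
    by_cases h : x = 0
    · exact ⟨i, by simp [bas, h]⟩
    · obtain ⟨j, hj⟩ := bas_append true w i
      exact ⟨j, by simp [bas, h, fin2_eq_one h, hj]⟩
  | true, x :: w, i => by
    by_cases h : x = 0
    · exact ⟨i, by simp [bas, h]⟩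
    · obtain ⟨j, hj⟩ := bas_append false w i
      exact ⟨j, by simp [bas, h, fin2_eq_one h, hj]⟩

theorem basI_append : ∀ (fl : Bool) (v : Vert 2) (i : Fin 2),
    ∃ j, basI fl (v ++ [i]) = basI fl v ++ [j]
  | false, [], i => by
    by_cases h : i = 0
    · exact ⟨i, by simp [basI, h]⟩
    · exact ⟨i, by simp [basI, h, fin2_eq_one h]⟩
  | true, [], i => by
    by_cases h : i = 0
    · exact ⟨1, by simp [basI, h]⟩
    · exact ⟨0, by simp [basI, h, fin2_eq_one h]⟩
  | false, x :: w, i => by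
    by_cases h : x = 0
    · exact ⟨i, by simp [basI, h]⟩
    · obtain ⟨j, hj⟩ := basI_append true w i
      exact ⟨j, by simp [basI, h, fin2_eq_one h, hj]⟩
  | true, x :: w, i => by
    by_cases h : x = 0
    · obtain ⟨j, hj⟩ := basI_append false w i
      exact ⟨j, by simp [basI, h, hj]⟩
    · exact ⟨i, by simp [basI, h, fin2_eq_one h]⟩

/-- The generator `a = (1, b)` of the Basilica group, as a tree automorphism. -/
def bas_a : AutT 2 := ⟨basPerm false, bas_append false, basI_append false⟩

/-- The generator `b = (1, a)ε` of the Basilica group, as a tree automorphism. -/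
def bas_b : AutT 2 := ⟨basPerm true, bas_append true, basI_append true⟩

/-- The Basilica group `G = ⟨a, b⟩`. -/
def Basilica : Subgroup (AutT 2) :=
  Subgroup.closure {bas_a, bas_b}

/-- The normal closure `⟨a⟩^G` of `a` in the Basilica group. -/
def BasA : Subgroup (AutT 2) :=
  Subgroup.closure {x | ∃ g ∈ Basilica, x = g * bas_a * g⁻¹}

/-- The normal closure `⟨b⟩^G` of `b` in the Basilica group. -/
def BasB : Subgroup (AutT 2) :=
  Subgroup.closure {x | ∃ g ∈ Basilica, x = g * bas_b * g⁻¹}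

end Basilica

/-! ### Auxiliary development for stmt_15 -/

namespace Bas15

open scoped commutatorElement

/-- A letter of a word in the generators: `(isB, isPositive)`. -/
abbrev Letter := Bool × Bool

/-- The generator selected by a `Bool`. -/
def gv : Bool → AutT 2 := fun t => cond t bas_b bas_a

/-- The group element of a letter. -/
def gen (x : Letter) : AutT 2 := cond x.2 (gv x.1) (gv x.1)⁻¹

/-- Evaluation of a word. -/
def prodA (L : List Letter) : AutT 2 := (L.map gen).prod

@[simp] theorem prodA_nil : prodA ([] : List Letter) = 1 := rfl

@[simp] theorem prodA_cons (x : Letter) (L : List Letter) :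
    prodA (x :: L) = gen x * prodA L := by
  simp [prodA]

theorem prodA_append (L₁ L₂ : List Letter) :
    prodA (L₁ ++ L₂) = prodA L₁ * prodA L₂ := by
  simp [prodA]

/-- The pure action of a letter on vertices. -/
def act (x : Letter) : Vert 2 → Vert 2 := cond x.2 (bas x.1) (basI x.1)

theorem coe_mul_apply (f g : AutT 2) (v : Vert 2) :
    (↑(f * g) : Equiv.Perm (Vert 2)) v = (↑f : Equiv.Perm (Vert 2)) ((↑g : Equiv.Perm (Vert 2)) v) :=
  rfl

theorem gen_apply (x : Letter) (v : Vert 2) :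
    (↑(gen x) : Equiv.Perm (Vert 2)) v = act x v := by
  rcases x with ⟨t, s⟩
  cases s <;> cases t <;> rfl

/-- The section of a letter at position `p` (`false ↦ 0`, `true ↦ 1`), as a word. -/
def secL : Letter → Bool → List Letter
  | (false, _), false => []
  | (false, s), true => [(true, s)]
  | (true, true), false => []
  | (true, true), true => [(false, true)]
  | (true, false), false => [(false, false)]
  | (true, false), true => []

/-- Splitting a word into its two level-one sections and root swap. -/
def split : List Letter → List Letter × List Letter × Bool
  | [] => ([], [], false)
  | x :: L =>
      (secL x (split L).2.2 ++ (split L).1,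
       secL x (!(split L).2.2) ++ (split L).2.1,
       xor x.1 (split L).2.2)

theorem bas_f0 (w : Vert 2) : bas false (0 :: w) = 0 :: w := by simp [bas]
theorem bas_f1 (w : Vert 2) : bas false (1 :: w) = 1 :: bas true w := by
  simp only [bas]; norm_num
theorem bas_t0 (w : Vert 2) : bas true (0 :: w) = 1 :: w := by simp [bas]
theorem bas_t1 (w : Vert 2) : bas true (1 :: w) = 0 :: bas false w := by
  simp only [bas]; norm_num
theorem basI_f0 (w : Vert 2) : basI false (0 :: w) = 0 :: w := by simp [basI]
theorem basI_f1 (w : Vert 2) : basI false (1 :: w) = 1 :: basI true w := by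
  simp only [basI]; norm_num
theorem basI_t0 (w : Vert 2) : basI true (0 :: w) = 1 :: basI false w := by simp [basI]
theorem basI_t1 (w : Vert 2) : basI true (1 :: w) = 0 :: w := by
  simp only [basI]; norm_num

theorem split_spec : ∀ (L : List Letter) (p : Bool) (w : Vert 2),
    (↑(prodA L) : Equiv.Perm (Vert 2)) ((cond p 1 0) :: w)
      = (cond (xor p (split L).2.2) 1 0) ::
        (↑(prodA (cond p (split L).2.1 (split L).1)) : Equiv.Perm (Vert 2)) w
  | [], p, w => by cases p <;> rfl
  | x :: L, p, w => by
    have IH := split_spec L p w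
    rw [prodA_cons, coe_mul_apply, IH]
    rcases x with ⟨xb, xs⟩
    rw [gen_apply]
    cases hs : (split L).2.2 <;> rw [hs] at IH <;>
      cases p <;> cases xb <;> cases xs <;>
      simp [split, secL, act, hs, prodA_append, prodA_cons, coe_mul_apply, gen_apply,
        bas_f0, bas_f1, bas_t0, bas_t1, basI_f0, basI_f1, basI_t0, basI_t1]

theorem split_swap_false {L : List Letter} (h : prodA L = 1) : (split L).2.2 = false := by
  have := split_spec L false []
  rw [h] at this
  simp only [Subgroup.coe_one, Equiv.Perm.coe_one, id_eq, cond_false] at this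
  rcases List.cons_eq_cons.mp this with ⟨h1, -⟩
  cases hs : (split L).2.2
  · rfl
  · rw [hs] at h1; simp at h1

theorem split_side_one {L : List Letter} (h : prodA L = 1) (p : Bool) :
    prodA (cond p (split L).2.1 (split L).1) = 1 := by
  have hs := split_swap_false h
  have key : ∀ w : Vert 2,
      (↑(prodA (cond p (split L).2.1 (split L).1)) : Equiv.Perm (Vert 2)) w = w := by
    intro w
    have := split_spec L p w
    rw [h, hs] at this
    simp only [Subgroup.coe_one, Equiv.Perm.coe_one, id_eq, Bool.xor_false] at this
    exact (List.cons_eq_cons.mp this.symm).2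
  have : (↑(prodA (cond p (split L).2.1 (split L).1)) : Equiv.Perm (Vert 2)) = 1 :=
    Equiv.ext fun w => key w
  exact Subtype.ext this

/-- signed `a`-weight of a letter -/
def wa (x : Letter) : ℤ := cond x.1 0 (cond x.2 1 (-1))
/-- signed `b`-weight of a letter -/
def wb (x : Letter) : ℤ := cond x.1 (cond x.2 1 (-1)) 0

def ea : List Letter → ℤ
  | [] => 0
  | x :: L => wa x + ea L

def eb : List Letter → ℤ
  | [] => 0
  | x :: L => wb x + eb L

theorem ea_append : ∀ (L₁ L₂ : List Letter), ea (L₁ ++ L₂) = ea L₁ + ea L₂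
  | [], L₂ => by simp [ea]
  | x :: L₁, L₂ => by simp [ea, ea_append L₁ L₂]; ring

theorem eb_append : ∀ (L₁ L₂ : List Letter), eb (L₁ ++ L₂) = eb L₁ + eb L₂
  | [], L₂ => by simp [eb]
  | x :: L₁, L₂ => by simp [eb, eb_append L₁ L₂]; ring

theorem secL_wa (x : Letter) (s : Bool) : eb (secL x s) + eb (secL x (!s)) = wa x := by
  rcases x with ⟨xb, xs⟩; cases xb <;> cases xs <;> cases s <;> simp [secL, eb, wb, wa]

theorem secL_wb (x : Letter) (s : Bool) : ea (secL x s) + ea (secL x (!s)) = wb x := by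
  rcases x with ⟨xb, xs⟩; cases xb <;> cases xs <;> cases s <;> simp [secL, ea, wa, wb]

theorem sums_split : ∀ L : List Letter,
    ea L = eb (split L).1 + eb (split L).2.1 ∧ eb L = ea (split L).1 + ea (split L).2.1
  | [] => by simp [split, ea, eb]
  | x :: L => by
    obtain ⟨h1, h2⟩ := sums_split L
    constructor
    · show wa x + ea L = _
      simp only [split, eb_append, h1, secL_wa x (split L).2.2]
      rw [← secL_wa x (split L).2.2]
      ring
    · show wb x + eb L = _
      simp only [split, ea_append, h2]
      rw [← secL_wb x (split L).2.2]
      ring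

theorem secL_len (x : Letter) (s : Bool) :
    (secL x s).length + (secL x (!s)).length = 1 := by
  rcases x with ⟨xb, xs⟩; cases xb <;> cases xs <;> cases s <;> simp [secL]

theorem split_len : ∀ L : List Letter,
    (split L).1.length + (split L).2.1.length = L.length
  | [] => rfl
  | x :: L => by
    have := split_len L
    have h2 := secL_len x (split L).2.2
    simp only [split, List.length_append, List.length_cons]
    omega

theorem degA : ∀ L : List Letter, (split L).2.1 = [] →
    eb L = cond (split L).2.2 (-1) 0
  | [], _ => rfl
  | x :: L, h => by
    simp only [split, List.append_eq_nil_iff] at h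
    obtain ⟨hx, hL⟩ := h
    have IH := degA L hL
    rcases x with ⟨xb, xs⟩
    cases hs : (split L).2.2 <;> rw [hs] at hx IH <;>
      cases xb <;> cases xs <;> simp_all [secL, split, eb, wb]

theorem degB : ∀ L : List Letter, (split L).1 = [] →
    eb L = cond (split L).2.2 1 0
  | [], _ => rfl
  | x :: L, h => by
    simp only [split, List.append_eq_nil_iff] at h
    obtain ⟨hx, hL⟩ := h
    have IH := degB L hL
    rcases x with ⟨xb, xs⟩
    cases hs : (split L).2.2 <;> rw [hs] at hx IH <;>
      cases xb <;> cases xs <;> simp_all [secL, split, eb, wb]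

theorem ebz (n : ℕ) (IH : ∀ M : List Letter, M.length < n → prodA M = 1 → ea M = 0 ∧ eb M = 0)
    (L : List Letter) (hl : L.length ≤ n) (h : prodA L = 1) : eb L = 0 := by
  have hs := split_swap_false h
  by_cases h0 : (split L).1 = []
  · rw [degB L h0, hs]; rfl
  by_cases h1 : (split L).2.1 = []
  · rw [degA L h1, hs]; rfl
  · have hlen := split_len L
    have n0 : 1 ≤ (split L).1.length := Nat.one_le_iff_ne_zero.mpr
      (by simpa [List.length_eq_zero_iff] using h0)
    have n1 : 1 ≤ (split L).2.1.length := Nat.one_le_iff_ne_zero.mpr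
      (by simpa [List.length_eq_zero_iff] using h1)
    have e0 := IH (split L).1 (by omega) (split_side_one h false)
    have e1 := IH (split L).2.1 (by omega) (split_side_one h true)
    rw [(sums_split L).2, e0.1, e1.1]
    ring

theorem main_bound : ∀ n : ℕ, ∀ L : List Letter, L.length ≤ n → prodA L = 1 →
    ea L = 0 ∧ eb L = 0 := by
  intro n
  induction n using Nat.strong_induction_on with
  | _ n IHn =>
    intro L hl h
    have IH : ∀ M : List Letter, M.length < n → prodA M = 1 → ea M = 0 ∧ eb M = 0 :=
      fun M hm hM => IHn M.length hm M le_rfl hM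
    refine ⟨?_, ebz n IH L hl h⟩
    have hlen := split_len L
    have l0 : (split L).1.length ≤ n := by omega
    have l1 : (split L).2.1.length ≤ n := by omega
    rw [(sums_split L).1, ebz n IH _ l0 (split_side_one h false),
      ebz n IH _ l1 (split_side_one h true)]
    ring

theorem main (L : List Letter) (h : prodA L = 1) : ea L = 0 ∧ eb L = 0 :=
  main_bound L.length L le_rfl h

/-- Evaluation homomorphism from the free group on two letters. -/
def F : FreeGroup Bool →* AutT 2 := FreeGroup.lift gv

/-- Exponent-sum homomorphism to `ℤ × ℤ`. -/
def E : FreeGroup Bool →* Multiplicative (ℤ × ℤ) :=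
  FreeGroup.lift fun t => Multiplicative.ofAdd (cond t ((0 : ℤ), (1 : ℤ)) ((1 : ℤ), (0 : ℤ)))

theorem F_mk (L : List Letter) : F (FreeGroup.mk L) = prodA L := by
  rw [F, FreeGroup.lift_mk]
  rfl

theorem E_mk : ∀ L : List Letter, E (FreeGroup.mk L) = Multiplicative.ofAdd (ea L, eb L)
  | [] => by simp [E, FreeGroup.lift_mk, ea, eb]; rfl
  | x :: L => by
    have IH := E_mk L
    have hcons : FreeGroup.mk (x :: L) = FreeGroup.mk [x] * FreeGroup.mk L := by
      rw [FreeGroup.mul_mk]; rfl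
    rw [hcons, map_mul, IH]
    rcases x with ⟨xb, xs⟩
    cases xb <;> cases xs <;>
      simp [E, FreeGroup.lift_mk, ea, eb, wa, wb, ← ofAdd_neg, ← ofAdd_add, Prod.ext_iff]

theorem word_lemma (w : FreeGroup Bool) (h : F w = 1) : E w = 1 := by
  have hw : FreeGroup.mk w.toWord = w := FreeGroup.mk_toWord
  rw [← hw] at h ⊢
  rw [F_mk] at h
  obtain ⟨h1, h2⟩ := main _ h
  rw [E_mk, h1, h2]
  rfl

theorem range_F : F.range = Basilica := by
  apply le_antisymm
  · rintro x ⟨w, rfl⟩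
    induction w with
    | C1 => exact one_mem _
    | of t =>
      rw [show F (FreeGroup.of t) = gv t from FreeGroup.lift_apply_of]
      cases t
      · exact Subgroup.subset_closure (by simp [gv])
      · exact Subgroup.subset_closure (by simp [gv])
    | inv_of t ih => rw [map_inv]; exact inv_mem ih
    | mul x y hx hy => rw [map_mul]; exact mul_mem hx hy
  · rw [Basilica]
    apply Subgroup.closure_le _ |>.mpr
    rintro x (rfl | rfl)
    · exact ⟨FreeGroup.of false, FreeGroup.lift_apply_of⟩
    · exact ⟨FreeGroup.of true, FreeGroup.lift_apply_of⟩

theorem key (n m : ℤ) (h : bas_b ^ m * bas_a ^ n ∈ ⁅Basilica, Basilica⁆) :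
    n = 0 ∧ m = 0 := by
  rw [← range_F, MonoidHom.range_eq_map, ← Subgroup.map_commutator] at h
  obtain ⟨w, hw, hFw⟩ := h
  -- E kills the commutator subgroup
  have hEw : E w = 1 := by
    have hle : ⁅(⊤ : Subgroup (FreeGroup Bool)), ⊤⁆ ≤ E.ker := by
      rw [Subgroup.commutator_le]
      intro g _ h _
      rw [MonoidHom.mem_ker, map_commutatorElement]
      exact commutatorElement_eq_one_iff_commute.mpr (mul_comm _ _)
    exact hle hw
  set u : FreeGroup Bool := (FreeGroup.of true) ^ m * (FreeGroup.of false) ^ n with hu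
  have hFu : F u = bas_b ^ m * bas_a ^ n := by
    rw [hu, map_mul, map_zpow, map_zpow]
    rw [show F (FreeGroup.of true) = gv true from FreeGroup.lift_apply_of,
      show F (FreeGroup.of false) = gv false from FreeGroup.lift_apply_of]
    rfl
  have h1 : F (w⁻¹ * u) = 1 := by
    rw [map_mul, map_inv, hFw, hFu, inv_mul_eq_one]
  have h2 := word_lemma _ h1
  rw [map_mul, map_inv, hEw, inv_one, one_mul] at h2
  have hEu : E u = Multiplicative.ofAdd (n, m) := by
    rw [hu, map_mul, map_zpow, map_zpow,
      show E (FreeGroup.of true) = Multiplicative.ofAdd ((0 : ℤ), (1 : ℤ)) from FreeGroup.lift_apply_of,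
      show E (FreeGroup.of false) = Multiplicative.ofAdd ((1 : ℤ), (0 : ℤ)) from FreeGroup.lift_apply_of,
      ← ofAdd_zsmul, ← ofAdd_zsmul, ← ofAdd_add]
    congr 1
    simp [Prod.ext_iff]
  rw [hEu] at h2
  have : (n, m) = ((0 : ℤ), (0 : ℤ)) := by
    have := congrArg Multiplicative.toAdd h2
    simpa using this
  exact ⟨(Prod.ext_iff.mp this).1, (Prod.ext_iff.mp this).2⟩

/-- Normal closure in the Basilica group of an element. -/
def NC (c : AutT 2) : Subgroup (AutT 2) :=
  Subgroup.closure {x | ∃ g ∈ Basilica, x = g * c * g⁻¹}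

theorem BasA_eq : BasA = NC bas_a := rfl
theorem BasB_eq : BasB = NC bas_b := rfl

theorem mem_basilica_a : bas_a ∈ Basilica := Subgroup.subset_closure (by simp)
theorem mem_basilica_b : bas_b ∈ Basilica := Subgroup.subset_closure (by simp)

theorem self_mem_NC (c : AutT 2) : c ∈ NC c :=
  Subgroup.subset_closure ⟨1, one_mem _, by group⟩

theorem conj_mem_NC (c : AutT 2) {g x : AutT 2} (hg : g ∈ Basilica) (hx : x ∈ NC c) :
    g * x * g⁻¹ ∈ NC c := by
  have hmap : Subgroup.map (MulAut.conj g).toMonoidHom (NC c) ≤ NC c := by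
    rw [NC, MonoidHom.map_closure, Subgroup.closure_le]
    rintro y ⟨z, ⟨h, hh, rfl⟩, rfl⟩
    apply Subgroup.subset_closure
    exact ⟨g * h, mul_mem hg hh, by simp [MulAut.conj_apply]; group⟩
  exact hmap ⟨x, hx, by simp [MulAut.conj_apply]⟩

theorem conj_mem_comm {g x : AutT 2} (hg : g ∈ Basilica)
    (hx : x ∈ ⁅Basilica, Basilica⁆) : g * x * g⁻¹ ∈ ⁅Basilica, Basilica⁆ := by
  have hmapB : Subgroup.map (MulAut.conj g).toMonoidHom Basilica = Basilica := by
    apply le_antisymm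
    · rintro _ ⟨y, hy, rfl⟩
      simpa [MulAut.conj_apply] using mul_mem (mul_mem hg hy) (inv_mem hg)
    · intro y hy
      refine ⟨g⁻¹ * y * g, mul_mem (mul_mem (inv_mem hg) hy) hg, ?_⟩
      simp [MulAut.conj_apply]
      group
  have hmem : g * x * g⁻¹ ∈ Subgroup.map (MulAut.conj g).toMonoidHom ⁅Basilica, Basilica⁆ :=
    ⟨x, hx, by simp [MulAut.conj_apply]⟩
  rwa [Subgroup.map_commutator, hmapB] at hmem

/-- Every element of the Basilica group decomposes as an element of the normal
closure of `c` times a power of `o`, provided the two generators do. -/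
theorem decompose_NC (c o : AutT 2) (ho : o ∈ Basilica)
    (h1 : ∃ d ∈ NC c, ∃ n : ℤ, bas_a = d * o ^ n)
    (h2 : ∃ d ∈ NC c, ∃ n : ℤ, bas_b = d * o ^ n) :
    ∀ x ∈ Basilica, ∃ d ∈ NC c, ∃ n : ℤ, x = d * o ^ n := by
  intro x hx
  induction hx using Subgroup.closure_induction with
  | mem y hy =>
    rcases hy with rfl | rfl
    · exact h1
    · exact h2
  | one => exact ⟨1, one_mem _, 0, by group⟩
  | mul y z _ _ ihy ihz =>
    obtain ⟨d, hd, n, rfl⟩ := ihy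
    obtain ⟨e, he, m, rfl⟩ := ihz
    refine ⟨d * (o ^ n * e * (o ^ n)⁻¹), mul_mem hd (conj_mem_NC c (zpow_mem ho n) he),
      n + m, by group⟩
  | inv y _ ihy =>
    obtain ⟨d, hd, n, rfl⟩ := ihy
    refine ⟨(o ^ n)⁻¹ * d⁻¹ * o ^ n, ?_, -n, by group⟩
    have := conj_mem_NC c (zpow_mem ho (-n)) (inv_mem hd)
    simpa [zpow_neg] using this

theorem commutator_mem_NC (c o : AutT 2) (ho : o ∈ Basilica)
    (h1 : ∃ d ∈ NC c, ∃ n : ℤ, bas_a = d * o ^ n)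
    (h2 : ∃ d ∈ NC c, ∃ n : ℤ, bas_b = d * o ^ n)
    {g h : AutT 2} (hg : g ∈ Basilica) (hh : h ∈ Basilica) : ⁅g, h⁆ ∈ NC c := by
  obtain ⟨d, hd, n, rfl⟩ := decompose_NC c o ho h1 h2 g hg
  obtain ⟨e, he, m, rfl⟩ := decompose_NC c o ho h1 h2 h hh
  have hid : ⁅d * o ^ n, e * o ^ m⁆
      = d * (o ^ n * e * (o ^ n)⁻¹) * (o ^ m * d⁻¹ * (o ^ m)⁻¹) * e⁻¹ := by
    rw [commutatorElement_def]; group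
  rw [hid]
  exact mul_mem (mul_mem (mul_mem hd (conj_mem_NC c (zpow_mem ho n) he))
    (conj_mem_NC c (zpow_mem ho m) (inv_mem hd))) (inv_mem he)

theorem easyA : ⁅Basilica, Basilica⁆ ≤ BasA := by
  rw [BasA_eq, Subgroup.commutator_le]
  intro g hg h hh
  refine commutator_mem_NC bas_a bas_b mem_basilica_b
    ⟨bas_a, self_mem_NC _, 0, by group⟩ ⟨1, one_mem _, 1, by group⟩ hg hh

theorem easyB : ⁅Basilica, Basilica⁆ ≤ BasB := by
  rw [BasB_eq, Subgroup.commutator_le]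
  intro g hg h hh
  refine commutator_mem_NC bas_b bas_a mem_basilica_a
    ⟨1, one_mem _, 1, by group⟩ ⟨bas_b, self_mem_NC _, 0, by group⟩ hg hh

theorem decompose_pow (c : AutT 2) (hc : c ∈ Basilica) :
    ∀ x ∈ NC c, ∃ n : ℤ, ∃ d ∈ ⁅Basilica, Basilica⁆, x = c ^ n * d := by
  intro x hx
  induction hx using Subgroup.closure_induction with
  | mem y hy =>
    obtain ⟨g, hg, rfl⟩ := hy
    refine ⟨1, c⁻¹ * (g * c * g⁻¹), ?_, by group⟩
    have : ⁅c⁻¹, g⁆ ∈ ⁅Basilica, Basilica⁆ :=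
      Subgroup.commutator_mem_commutator (inv_mem hc) hg
    rw [commutatorElement_def] at this
    convert this using 1
    try group
  | one => exact ⟨0, 1, one_mem _, by group⟩
  | mul y z _ _ ihy ihz =>
    obtain ⟨n, d, hd, rfl⟩ := ihy
    obtain ⟨m, e, he, rfl⟩ := ihz
    refine ⟨n + m, c ^ (-m) * d * (c ^ (-m))⁻¹ * e,
      mul_mem (conj_mem_comm (zpow_mem hc (-m)) hd) he, by group⟩
  | inv y _ ihy =>
    obtain ⟨n, d, hd, rfl⟩ := ihy
    exact ⟨-n, c ^ n * d⁻¹ * (c ^ n)⁻¹, conj_mem_comm (zpow_mem hc n) (inv_mem hd), by group⟩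

end Bas15

/-- Lemma 4.10: for the Basilica group `G = ⟨a,b⟩`, with
`A = ⟨a⟩^G` and `B = ⟨b⟩^G` the normal closures of the generators, the derived
subgroup satisfies `G' = A ∩ B`. -/
theorem stmt_15 : ⁅Basilica, Basilica⁆ = BasA ⊓ BasB := by
  apply le_antisymm
  · exact le_inf Bas15.easyA Bas15.easyB
  · rintro x ⟨hxa, hxb⟩
    obtain ⟨n, c, hc, hxe⟩ := Bas15.decompose_pow bas_a Bas15.mem_basilica_a x hxa
    obtain ⟨m, d, hd, hye⟩ := Bas15.decompose_pow bas_b Bas15.mem_basilica_b x hxb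
    have heq : bas_b ^ (-m) * bas_a ^ n = d * c⁻¹ := by
      calc bas_b ^ (-m) * bas_a ^ n = bas_b ^ (-m) * (bas_a ^ n * c) * c⁻¹ := by group
        _ = bas_b ^ (-m) * (bas_b ^ m * d) * c⁻¹ := by rw [← hxe, hye]
        _ = d * c⁻¹ := by group
    have hmem : bas_b ^ (-m) * bas_a ^ n ∈ ⁅Basilica, Basilica⁆ :=
      heq ▸ mul_mem hd (inv_mem hc)
    obtain ⟨hn, hm⟩ := Bas15.key n (-m) hmem
    have hx : x = c := by rw [hxe, hn]; group
    rwa [hx]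
end
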